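/- Let R ⊆ {1,…,d} be a ruler and let A ∈ ℝ^{d×d} be a symmetric matrix. Define the Toeplitz matrix = Toep(â) by â_s = (1/|R_s|) Σ_{(j,k)∈R_s} A_{j,k} for s ∈ {0,…,d−1}. Then for every symmetric Toeplitz matrix M ∈ ℝ^{d×d}, the principal submatrices indexed by R satisfy tr(Â_R M_R) = tr(A_R M_R). -/

import Mathlib

open MeasureTheory ProbabilityTheory Matrix Real

noncomputable section

/-- The uniform quantizer with level `Δ`: `Q_Δ(x) = Δ(⌊x/Δ⌋ + 1/2)`. -/
def quant (Δ x : ℝ) : ℝ := Δ * (⌊x / Δ⌋ + 1 / 2)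

/-- The uniform distribution on `[-Δ/2, Δ/2]`. -/
def unifMeasure (Δ : ℝ) : Measure ℝ :=
  (ENNReal.ofReal Δ)⁻¹ • (volume.restrict (Set.Icc (-(Δ / 2)) (Δ / 2)))

/-- The triangular-dither distribution: the law of the sum of two independent
uniform random variables on `[-Δ/2, Δ/2]`. -/
def triMeasure (Δ : ℝ) : Measure ℝ :=
  Measure.map (fun p : ℝ × ℝ => p.1 + p.2) ((unifMeasure Δ).prod (unifMeasure Δ))

/-- The centered multivariate Gaussian measure `N(0, T)` on `ℝ^d`, realized as the
pushforward of the standard Gaussian by the positive semidefinite square root of `T`. -/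
def multiGaussian {d : ℕ} (T : Matrix (Fin d) (Fin d) ℝ) (hT : T.PosSemidef) :
    Measure (Fin d → ℝ) :=
  Measure.map (fun z => ((hT.1.eigenvectorUnitary : Matrix (Fin d) (Fin d) ℝ) *
      diagonal (fun i => Real.sqrt (hT.1.eigenvalues i)) *
      (star hT.1.eigenvectorUnitary : Matrix (Fin d) (Fin d) ℝ)).mulVec z) (Measure.pi fun _ : Fin d => gaussianReal 0 1)

/-- `R_s`: the ordered pairs `(j, k) ∈ R × R` with `j - k = s`. -/
def pairsOf {d : ℕ} (R : Finset (Fin d)) (s : ℕ) : Finset (Fin d × Fin d) :=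
  (R ×ˢ R).filter fun p => (p.1 : ℕ) = (p.2 : ℕ) + s

/-- A ruler: each distance `s ∈ {0, …, d-1}` is realized by some pair in `R`. -/
def IsRuler {d : ℕ} (R : Finset (Fin d)) : Prop :=
  ∀ s < d, (pairsOf R s).Nonempty

/-- The coverage coefficient `φ(R) = Σ_{s=1}^{d-1} 1/|R_s|`. -/
def coverage {d : ℕ} (R : Finset (Fin d)) : ℝ :=
  ∑ s ∈ Finset.Ico 1 d, (1 : ℝ) / (pairsOf R s).card

/-- The symmetric Toeplitz matrix generated by `a`, with `Toep(a)_{j,k} = a_{|j-k|}`. -/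
def toep {d : ℕ} (a : Fin d → ℝ) : Matrix (Fin d) (Fin d) ℝ :=
  fun j k => a ⟨Nat.dist j.1 k.1, by
    have hj := j.isLt; have hk := k.isLt; simp only [Nat.dist]; omega⟩

/-- The `ℓ²` operator (spectral) norm of a matrix. -/
def opNorm {m : Type*} [Fintype m] [DecidableEq m] (A : Matrix m m ℝ) : ℝ :=
  ‖Matrix.toEuclideanCLM (𝕜 := ℝ) A‖

/-- The Frobenius norm of a matrix. -/
def frobNorm {m : Type*} [Fintype m] (A : Matrix m m ℝ) : ℝ :=
  Real.sqrt (∑ i, ∑ j, (A i j) ^ 2)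

/-- The entrywise maximum norm of a matrix. -/
def maxNorm {m : Type*} [Fintype m] (A : Matrix m m ℝ) : ℝ :=
  ⨆ i, ⨆ j, |A i j|

/-- The principal submatrix of `A` with rows and columns indexed by `R`. -/
def subMatrix {d : ℕ} (A : Matrix (Fin d) (Fin d) ℝ) (R : Finset (Fin d)) :
    Matrix R R ℝ :=
  A.submatrix (fun i : R => (i : Fin d)) (fun j : R => (j : Fin d))

/-- The ruler-based quantized coefficient estimator
`â_s = (1/(n|R_s|)) Σ_l Σ_{(j,k)∈R_s} ẋ_j^{(l)} ẋ_k^{(l)} − (Δ²/4)·1{s=0}`. -/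
def hatCoef {d : ℕ} (Δ : ℝ) (R : Finset (Fin d)) (n : ℕ)
    (xdot : Fin n → Fin d → ℝ) (s : ℕ) : ℝ :=
  (1 / (n * (pairsOf R s).card)) *
      ∑ l, ∑ p ∈ pairsOf R s, xdot l p.1 * xdot l p.2
    - Δ ^ 2 / 4 * (if s = 0 then 1 else 0)

/-- The ruler-based quantized Toeplitz covariance estimator `T̂ = Toep(â)`. -/
def hatT {d : ℕ} (Δ : ℝ) (R : Finset (Fin d)) (n : ℕ)
    (xdot : Fin n → Fin d → ℝ) : Matrix (Fin d) (Fin d) ℝ :=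
  toep fun s => hatCoef Δ R n xdot s.1

/-- The quantized samples `ẋ^{(l)} = Q_Δ(x^{(l)} + τ^{(l)})`, as a function of the
random outcome `ω`. -/
def xdotOf {d n : ℕ} {Ω : Type*} (Δ : ℝ) (x τ : Fin n → Ω → Fin d → ℝ) (ω : Ω) :
    Fin n → Fin d → ℝ :=
  fun l i => quant Δ (x l ω i + τ l ω i)

/-- The setting of the ruler-based quantized Toeplitz covariance estimation problem:
`T` is a positive semidefinite symmetric Toeplitz matrix, `x^{(1)}, …, x^{(n)}` are
i.i.d. samples from `N(0, T)`, the dithers `τ^{(1)}, …, τ^{(n)}` have i.i.d. triangular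
entries at level `Δ`, and all samples and dithers are jointly independent. -/
structure QuantSetting {d n : ℕ} {Ω : Type*} [MeasurableSpace Ω] (μ : Measure Ω)
    (T : Matrix (Fin d) (Fin d) ℝ) (Δ : ℝ)
    (x τ : Fin n → Ω → Fin d → ℝ) : Prop where
  psd : T.PosSemidef
  toeplitz : ∃ a : Fin d → ℝ, T = toep a
  quantLevel : 0 < Δ
  meas_x : ∀ l, Measurable (x l)
  meas_τ : ∀ l, Measurable (τ l)
  law_x : ∀ l, μ.map (x l) = multiGaussian T psd
  law_τ : ∀ l, μ.map (τ l) = Measure.pi fun _ : Fin d => triMeasure Δ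
  indep : iIndepFun (Sum.elim x τ) μ

end
noncomputable section

/-- The ruler `R_α = {1,…,d^α} ∪ {d, d−d^{1−α}, …, d−(d^α−1)d^{1−α}}` (with the
positions `1,…,d` represented by `Fin d`), parametrized by `a = d^α`, `b = d^{1−α}`. -/
def rulerAlpha (d a b : ℕ) : Finset (Fin d) :=
  (Finset.univ.filter fun j : Fin d => (j : ℕ) < a) ∪
    (Finset.univ.filter fun j : Fin d => ∃ t ∈ Finset.range a, (j : ℕ) + t * b + 1 = d)

/-- `L_e(x) = e_0 + 2 Σ_{s=1}^{d-1} e_s cos(2πsx)`. -/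
def Lfun {d : ℕ} (e : Fin d → ℝ) (x : ℝ) : ℝ :=
  ∑ s : Fin d, (if (s : ℕ) = 0 then 1 else 2) * e s * Real.cos (2 * Real.pi * s * x)

/-- Entrywise thresholding of a matrix at level `ζ`. -/
def thresholdMat {d : ℕ} (ζ : ℝ) (A : Matrix (Fin d) (Fin d) ℝ) :
    Matrix (Fin d) (Fin d) ℝ :=
  fun i j => if ζ ≤ |A i j| then A i j else 0

end

section Aux

lemma toep_apply_eq {d : ℕ} (a : Fin d → ℝ) (j k : Fin d) (s : ℕ) (hs : s < d)
    (h : (j : ℕ) = (k : ℕ) + s) : toep a j k = a ⟨s, hs⟩ := by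
  unfold toep
  congr 1
  ext
  simp only [Nat.dist]; omega

lemma toep_symm_apply {d : ℕ} (a : Fin d → ℝ) (j k : Fin d) :
    toep a j k = toep a k j := by
  unfold toep
  congr 1
  ext
  simp [Nat.dist_comm]

lemma sum_pairs_decomp {d : ℕ} (R : Finset (Fin d)) (F : Fin d × Fin d → ℝ)
    (hF : ∀ p : Fin d × Fin d, F (p.2, p.1) = F p) :
    ∑ p ∈ R ×ˢ R, F p =
      (∑ s ∈ Finset.range d, ∑ p ∈ pairsOf R s, F p)
      + ∑ s ∈ Finset.Ico 1 d, ∑ p ∈ pairsOf R s, F p := by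
  classical
  have hdisj : ∀ t ⊆ Finset.range d, (t : Set ℕ).PairwiseDisjoint (pairsOf R) := by
    intro t _ s hs s' hs' hne
    refine Finset.disjoint_left.2 ?_
    intro p hp hp'
    simp only [pairsOf, Finset.mem_filter] at hp hp'
    omega
  have h1 : (R ×ˢ R).filter (fun p => (p.2 : ℕ) ≤ (p.1 : ℕ)) =
      (Finset.range d).biUnion (pairsOf R) := by
    ext p
    simp only [Finset.mem_filter, Finset.mem_biUnion, Finset.mem_range, pairsOf,
      Finset.mem_product]
    constructor
    · rintro ⟨hp, hle⟩
      exact ⟨(p.1 : ℕ) - (p.2 : ℕ), by have := p.1.isLt; omega, hp, by omega⟩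
    · rintro ⟨s, hs, hp, he⟩
      exact ⟨hp, by omega⟩
  have h2 : (R ×ˢ R).filter (fun p => (p.2 : ℕ) < (p.1 : ℕ)) =
      (Finset.Ico 1 d).biUnion (pairsOf R) := by
    ext p
    simp only [Finset.mem_filter, Finset.mem_biUnion, Finset.mem_Ico, pairsOf,
      Finset.mem_product]
    constructor
    · rintro ⟨hp, hlt⟩
      exact ⟨(p.1 : ℕ) - (p.2 : ℕ), by have := p.1.isLt; omega, hp, by omega⟩
    · rintro ⟨s, hs, hp, he⟩
      exact ⟨hp, by omega⟩
  have hsplit := Finset.sum_filter_add_sum_filter_not (R ×ˢ R)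
    (fun p => (p.2 : ℕ) ≤ (p.1 : ℕ)) F
  have hsub : Finset.Ico 1 d ⊆ Finset.range d := by
    intro x hx
    simp only [Finset.mem_Ico] at hx
    simp only [Finset.mem_range]
    omega
  have hswap : ∑ p ∈ (R ×ˢ R).filter (fun p => ¬ ((p.2 : ℕ) ≤ (p.1 : ℕ))), F p =
      ∑ p ∈ (R ×ˢ R).filter (fun p => (p.2 : ℕ) < (p.1 : ℕ)), F p := by
    refine Finset.sum_nbij' (fun p => (p.2, p.1)) (fun p => (p.2, p.1)) ?_ ?_ ?_ ?_ ?_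
    · intro p hp
      simp only [Finset.mem_filter, Finset.mem_product] at hp ⊢
      exact ⟨⟨hp.1.2, hp.1.1⟩, by omega⟩
    · intro p hp
      simp only [Finset.mem_filter, Finset.mem_product] at hp ⊢
      exact ⟨⟨hp.1.2, hp.1.1⟩, by omega⟩
    · intro p _; rfl
    · intro p _; rfl
    · intro p _; exact (hF p).symm
  rw [← hsplit, hswap, h1, h2,
    Finset.sum_biUnion (hdisj _ le_rfl),
    Finset.sum_biUnion (hdisj _ hsub)]

lemma trace_sub_eq_sum {d : ℕ} (R : Finset (Fin d)) (B C : Matrix (Fin d) (Fin d) ℝ) :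
    Matrix.trace (subMatrix B R * subMatrix C R) =
      ∑ p ∈ R ×ˢ R, B p.1 p.2 * C p.2 p.1 := by
  classical
  rw [Finset.sum_product]
  simp only [Matrix.trace, Matrix.diag, Matrix.mul_apply, subMatrix,
    Matrix.submatrix_apply]
  rw [← Finset.sum_coe_sort R (fun j => ∑ k ∈ R, B j k * C k j)]
  refine Finset.sum_congr rfl fun i _ => ?_
  rw [← Finset.sum_coe_sort R (fun k => B i k * C k (i : Fin d))]

end Aux

/-- for a ruler `R` and a symmetric matrix `A`, the diagonal-averaged
Toeplitz matrix `Â = Toep(â)`, `â_s = (1/|R_s|) Σ_{(j,k)∈R_s} A_{j,k}`, satisfies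
`tr(Â_R M_R) = tr(A_R M_R)` for every symmetric Toeplitz matrix `M`. -/
theorem trace_avg_toeplitz_submatrix
    {d : ℕ} (R : Finset (Fin d)) (hR : IsRuler R)
    (A : Matrix (Fin d) (Fin d) ℝ) (hA : A.IsSymm) :
    ∀ mvec : Fin d → ℝ,
      Matrix.trace
        (subMatrix (toep fun s : Fin d =>
            (1 / ((pairsOf R s.1).card : ℝ)) * ∑ p ∈ pairsOf R s.1, A p.1 p.2) R *
          subMatrix (toep mvec) R) =
      Matrix.trace (subMatrix A R * subMatrix (toep mvec) R) := by
  intro mvec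
  classical
  set ahat : Fin d → ℝ := fun s : Fin d =>
    (1 / ((pairsOf R s.1).card : ℝ)) * ∑ p ∈ pairsOf R s.1, A p.1 p.2 with hahat
  rw [trace_sub_eq_sum, trace_sub_eq_sum]
  have hsym1 : ∀ p : Fin d × Fin d,
      toep ahat p.2 p.1 * toep mvec p.1 p.2 = toep ahat p.1 p.2 * toep mvec p.2 p.1 := by
    intro p
    rw [toep_symm_apply ahat, toep_symm_apply mvec]
  have hsym2 : ∀ p : Fin d × Fin d,
      A p.2 p.1 * toep mvec p.1 p.2 = A p.1 p.2 * toep mvec p.2 p.1 := by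
    intro p
    rw [hA.apply, toep_symm_apply mvec]
  rw [sum_pairs_decomp R _ hsym1, sum_pairs_decomp R _ hsym2]
  have key : ∀ s, s < d →
      ∑ p ∈ pairsOf R s, toep ahat p.1 p.2 * toep mvec p.2 p.1 =
      ∑ p ∈ pairsOf R s, A p.1 p.2 * toep mvec p.2 p.1 := by
    intro s hs
    have hcard : ((pairsOf R s).card : ℝ) ≠ 0 := by
      exact_mod_cast (Finset.card_pos.2 (hR s hs)).ne'
    have step : ∀ p ∈ pairsOf R s,
        toep ahat p.1 p.2 * toep mvec p.2 p.1 =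
        ((1 / ((pairsOf R s).card : ℝ)) * ∑ q ∈ pairsOf R s, A q.1 q.2) *
          mvec ⟨s, hs⟩ := by
      intro p hp
      have hpe : (p.1 : ℕ) = (p.2 : ℕ) + s := by
        simpa [pairsOf] using (Finset.mem_filter.1 hp).2
      rw [toep_symm_apply mvec, toep_apply_eq mvec p.1 p.2 s hs hpe,
        toep_apply_eq ahat p.1 p.2 s hs hpe]
    have step2 : ∀ p ∈ pairsOf R s,
        A p.1 p.2 * toep mvec p.2 p.1 = A p.1 p.2 * mvec ⟨s, hs⟩ := by
      intro p hp
      have hpe : (p.1 : ℕ) = (p.2 : ℕ) + s := by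
        simpa [pairsOf] using (Finset.mem_filter.1 hp).2
      rw [toep_symm_apply mvec, toep_apply_eq mvec p.1 p.2 s hs hpe]
    rw [Finset.sum_congr rfl step, Finset.sum_congr rfl step2,
      Finset.sum_const, ← Finset.sum_mul, nsmul_eq_mul]
    field_simp
  congr 1
  · refine Finset.sum_congr rfl fun s hs => key s (Finset.mem_range.1 hs)
  · refine Finset.sum_congr rfl fun s hs => key s (Finset.mem_Ico.1 hs).2
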